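/- Let c > 0, let i ≥ 2, and let I_1, ..., I_i > 0, S_1, ..., S_{i-1} < 0, L_1, ..., L_{i-1} > 0, L̄ > 0 be real numbers with Σ_{j=1}^{i} I_j < c. Define V^max = (I_i / (c (c - Σ_{j=1}^{i-1} I_j))) · (c L̄ - Σ_{j=1}^{i-1} S_j L_j) and V^H = (L̄/c) Σ_{j=1}^{i} I_j - Σ_{j=1}^{i-1} S_j L_j / c. Then V^max < V^H. -/

import Mathlib

open Finset

/-- Proposition 2(3): the new credit bound `V^max` is strictly
smaller than the H-bound `V^H` for every class `i ≥ 2`. -/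
theorem credit_bound_lt_H_bound
    (c : ℝ) (hc : 0 < c) (i : ℕ) (hi : 2 ≤ i)
    (I S L : ℕ → ℝ) (Lbar : ℝ)
    (hI : ∀ j ∈ Icc 1 i, 0 < I j)
    (hS : ∀ j ∈ Icc 1 (i - 1), S j < 0)
    (hL : ∀ j ∈ Icc 1 (i - 1), 0 < L j)
    (hLbar : 0 < Lbar)
    (hsum : ∑ j ∈ Icc 1 i, I j < c) :
    (I i / (c * (c - ∑ j ∈ Icc 1 (i - 1), I j)))
        * (c * Lbar - ∑ j ∈ Icc 1 (i - 1), S j * L j)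
      < (Lbar / c) * ∑ j ∈ Icc 1 i, I j - (∑ j ∈ Icc 1 (i - 1), S j * L j) / c := by
  set A := ∑ j ∈ Icc 1 (i - 1), I j with hA
  set B := ∑ j ∈ Icc 1 (i - 1), S j * L j with hB
  have hiI : 0 < I i := hI i (by simp; omega)
  have hsplit : ∑ j ∈ Icc 1 i, I j = A + I i := by
    have h1 : i = (i - 1) + 1 := by omega
    rw [h1, Finset.sum_Icc_succ_top (by omega), ← h1]
  have hApos : 0 < A := by
    apply Finset.sum_pos
    · intro j hj
      exact hI j (by simp at hj ⊢; omega)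
    · exact ⟨1, by simp; omega⟩
  have hBneg : B < 0 := by
    apply Finset.sum_neg
    · intro j hj
      exact mul_neg_of_neg_of_pos (hS j hj) (hL j hj)
    · exact ⟨1, by simp; omega⟩
  rw [hsplit] at hsum ⊢
  have hcA : 0 < c - A := by linarith
  have hden : 0 < c * (c - A) := mul_pos hc hcA
  rw [div_mul_eq_mul_div, div_lt_iff₀ hden]
  have hcne : c ≠ 0 := ne_of_gt hc
  have hrhs : ((Lbar / c) * (A + I i) - B / c) * (c * (c - A))
      = (Lbar * (A + I i) - B) * (c - A) := by field_simp
  rw [hrhs]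
  have key : A * (c - (A + I i)) > 0 := mul_pos hApos (by linarith)
  have h1 : I i * (c * Lbar) < (Lbar * (A + I i)) * (c - A) := by nlinarith
  have h2 : I i * (-B) < (c - A) * (-B) := by nlinarith
  nlinarith
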